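/- Compositions of dihomotopy equivalences are dihomotopy equivalences: if (f₁, g₁, F₁, G₁) is a dihomotopy equivalence from X to Y and (f₂, g₂, F₂, G₂) is a dihomotopy equivalence from Y to Z, then (f₂∘f₁, g₁∘g₂, F₁∘F₂, G₂∘G₁) is a dihomotopy equivalence from X to Z. -/

import Mathlib

open unitInterval

/-- A d-space structure on a topological space `X`: a distinguished set of
continuous maps `I → X` (the *dipaths*) containing the constants and closed
under monotone reparametrization and concatenation. -/
structure DirectedSpace (X : Type*) [TopologicalSpace X] where
  dipaths : Set C(I, X)
  const_mem : ∀ x : X, ContinuousMap.const I x ∈ dipaths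
  reparam_mem : ∀ p ∈ dipaths, ∀ φ : C(I, I), Monotone φ → p.comp φ ∈ dipaths
  trans_mem : ∀ {x y z : X} (γ : Path x y) (γ' : Path y z),
      γ.toContinuousMap ∈ dipaths → γ'.toContinuousMap ∈ dipaths →
      (γ.trans γ').toContinuousMap ∈ dipaths

variable {X : Type*} {Y : Type*} {Z : Type*}
variable [TopologicalSpace X] [TopologicalSpace Y] [TopologicalSpace Z]

/-- `PX(a,b)`: the set of dipaths from `a` to `b` (as a subspace of `C(I,X)`
with the compact-open topology). -/
def DiPaths (D : DirectedSpace X) (a b : X) : Set C(I, X) :=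
  {p | p ∈ D.dipaths ∧ p 0 = a ∧ p 1 = b}

/-- `Γ_X`: pairs of points joined by a dipath. -/
def DGamma (D : DirectedSpace X) : Set (X × X) :=
  {z | ∃ p : C(I, X), p ∈ DiPaths D z.1 z.2}

/-- A dmap between d-spaces. -/
structure DMap (D : DirectedSpace X) (E : DirectedSpace Y) where
  toCM : C(X, Y)
  maps_dipaths : ∀ p ∈ D.dipaths, toCM.comp p ∈ E.dipaths

/-- Composition of dmaps. -/
def DMap.comp' {D : DirectedSpace X} {E : DirectedSpace Y} {F : DirectedSpace Z}
    (f₂ : DMap E F) (f₁ : DMap D E) : DMap D F where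
  toCM := f₂.toCM.comp f₁.toCM
  maps_dipaths := fun p hp => by
    rw [ContinuousMap.comp_assoc]
    exact f₂.maps_dipaths _ (f₁.maps_dipaths p hp)

/-- The map `Pf_{a,b} : PX(a,b) → PY(f a, f b)` induced by a dmap, as a
continuous map (jointly continuous in the path; bigraded in `a, b`). -/
noncomputable def DMap.pmap {D : DirectedSpace X} {E : DirectedSpace Y}
    (f : DMap D E) (a b : X) :
    C(↥(DiPaths D a b), ↥(DiPaths E (f.toCM a) (f.toCM b))) where
  toFun p := ⟨f.toCM.comp p.val, f.maps_dipaths _ p.2.1,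
    by simp [p.2.2.1], by simp [p.2.2.2]⟩
  continuous_toFun := Continuous.subtype_mk
    ((ContinuousMap.continuous_postcomp f.toCM).comp continuous_subtype_val) _

lemma DMap.gamma_mem {D : DirectedSpace X} {E : DirectedSpace Y} (f : DMap D E)
    {a b : X} (h : (a, b) ∈ DGamma D) : (f.toCM a, f.toCM b) ∈ DGamma E := by
  obtain ⟨p, hp, h0, h1⟩ := h
  exact ⟨f.toCM.comp p, f.maps_dipaths p hp, by simp [h0], by simp [h1]⟩

lemma DMap.map_path_mem {D : DirectedSpace X} {E : DirectedSpace Y} (f : DMap D E)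
    {x y : X} (γ : Path x y) (h : γ.toContinuousMap ∈ D.dipaths) :
    (γ.map f.toCM.continuous).toContinuousMap ∈ E.dipaths := by
  have : (γ.map f.toCM.continuous).toContinuousMap = f.toCM.comp γ.toContinuousMap := by
    ext t; rfl
  rw [this]
  exact f.maps_dipaths _ h

/-- A dipath (as an element of a dipath space) regarded as a `Path`. -/
def diToPath {D : DirectedSpace X} {a b : X} (p : ↥(DiPaths D a b)) : Path a b where
  toContinuousMap := p.val
  source' := p.2.2.1
  target' := p.2.2.2

/-- A `Path` consisting of dipaths regarded as an element of a dipath space. -/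
def Path.toDi {D : DirectedSpace X} {a b : X} (γ : Path a b)
    (h : γ.toContinuousMap ∈ D.dipaths) : ↥(DiPaths D a b) :=
  ⟨γ.toContinuousMap, h, γ.source, γ.target⟩

/-- The extension map `PX(α,β) : PX(a,b) → PX(a',b')`, `p ↦ α * p * β`, for
`α` a dipath from `a'` to `a` and `β` a dipath from `b` to `b'`. -/
noncomputable def extCM (D : DirectedSpace X) {a b a' b' : X}
    (α : Path a' a) (β : Path b b')
    (hα : α.toContinuousMap ∈ D.dipaths) (hβ : β.toContinuousMap ∈ D.dipaths) :
    C(↥(DiPaths D a b), ↥(DiPaths D a' b')) where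
  toFun p := ⟨((α.trans (diToPath p)).trans β).toContinuousMap,
    D.trans_mem _ _ (D.trans_mem _ _ hα p.2.1) hβ,
    Path.source _, Path.target _⟩
  continuous_toFun := by
    apply Continuous.subtype_mk
    apply continuous_induced_dom.comp
    have h1 : Continuous fun p : ↥(DiPaths D a b) => diToPath p :=
      continuous_induced_rng.mpr continuous_subtype_val
    exact ((continuous_const.path_trans h1).path_trans continuous_const)

/-- A pair of continuous maps forming a homotopy equivalence. -/
def IsHomotopyEquivPair {A B : Type*} [TopologicalSpace A] [TopologicalSpace B]
    (u : C(A, B)) (v : C(B, A)) : Prop :=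
  (v.comp u).Homotopic (ContinuousMap.id A) ∧ (u.comp v).Homotopic (ContinuousMap.id B)

/-- The total space `PY^f` of dipaths of `Y` between images under `f` of pairs
in `Γ_X`, together with the grading pair. -/
def OverPaths {D : DirectedSpace X} {E : DirectedSpace Y} (f : DMap D E) :
    Set ((X × X) × C(I, Y)) :=
  {z | z.1 ∈ DGamma D ∧ z.2 ∈ DiPaths E (f.toCM z.1.1) (f.toCM z.1.2)}

/-- A continuously bigraded map `F : PY^f → PX`, with
`F_{a,b} : PY(f a, f b) → PX(a,b)`; continuity is joint in the grading and
in the path. -/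
structure Bigraded {D : DirectedSpace X} {E : DirectedSpace Y} (f : DMap D E) where
  toCM : C(↥(OverPaths f), C(I, X))
  mem : ∀ z : ↥(OverPaths f), toCM z ∈ DiPaths D z.val.1.1 z.val.1.2

/-- The slice `F_{a,b} : PY(f a, f b) → PX(a,b)` of a continuously bigraded map. -/
noncomputable def Bigraded.slice {D : DirectedSpace X} {E : DirectedSpace Y}
    {f : DMap D E} (F : Bigraded f) {a b : X} (hab : (a, b) ∈ DGamma D) :
    C(↥(DiPaths E (f.toCM a) (f.toCM b)), ↥(DiPaths D a b)) where
  toFun p := ⟨F.toCM ⟨((a, b), p.val), hab, p.2⟩, F.mem _⟩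
  continuous_toFun := by
    apply Continuous.subtype_mk
    exact F.toCM.continuous.comp
      (Continuous.subtype_mk (continuous_const.prodMk continuous_subtype_val) _)
/-- A dihomotopy equivalence between d-spaces `D` (on `X`) and `E` (on `Y`). -/
structure DihomotopyEquiv (D : DirectedSpace X) (E : DirectedSpace Y) where
  /-- the forward dmap -/
  f : DMap D E
  /-- the backward dmap -/
  g : DMap E D
  /-- `g ∘ f` is homotopic to the identity -/
  gf : (g.toCM.comp f.toCM).Homotopic (ContinuousMap.id X)
  /-- `f ∘ g` is homotopic to the identity -/
  fg : (f.toCM.comp g.toCM).Homotopic (ContinuousMap.id Y)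
  /-- the continuously bigraded map `F : PY^f → PX` -/
  F : Bigraded f
  /-- the continuously bigraded map `G : PX^g → PY` -/
  G : Bigraded g
  /-- each `(Pf_{a,b}, F_{a,b})` is a homotopy equivalence -/
  hF : ∀ {a b : X} (hab : (a, b) ∈ DGamma D),
      IsHomotopyEquivPair (f.pmap a b) (F.slice hab)
  /-- each `(Pg_{c,d}, G_{c,d})` is a homotopy equivalence -/
  hG : ∀ {c d : Y} (hcd : (c, d) ∈ DGamma E),
      IsHomotopyEquivPair (g.pmap c d) (G.slice hcd)
  /-- extension condition: for every extension `(α,β)` of `(a,b)` to `(a',b')`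
  in `X` there is an extension `(γ,δ)` in `Y` making the `Pf`-square and the
  `F`-square commute up to homotopy. -/
  extF : ∀ {a b a' b' : X} (hab : (a, b) ∈ DGamma D) (ha'b' : (a', b') ∈ DGamma D)
      (α : Path a' a) (β : Path b b')
      (hα : α.toContinuousMap ∈ D.dipaths) (hβ : β.toContinuousMap ∈ D.dipaths),
      ∃ (γ : Path (f.toCM a') (f.toCM a)) (δ : Path (f.toCM b) (f.toCM b'))
        (hγ : γ.toContinuousMap ∈ E.dipaths) (hδ : δ.toContinuousMap ∈ E.dipaths),
        ((f.pmap a' b').comp (extCM D α β hα hβ)).Homotopic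
          ((extCM E γ δ hγ hδ).comp (f.pmap a b)) ∧
        ((F.slice ha'b').comp (extCM E γ δ hγ hδ)).Homotopic
          ((extCM D α β hα hβ).comp (F.slice hab))
  /-- extension condition: for every extension `(α,β)` in `X` of a pair
  `(g c, g d)` there is an extension `(γ,δ)` of `(c,d)` in `Y`, landing in the
  image of `g`, making the `G`-square and the `Pg`-square commute up to
  homotopy. -/
  extG : ∀ {c d : Y} {u' v' : X} (hcd : (c, d) ∈ DGamma E)
      (α : Path u' (g.toCM c)) (β : Path (g.toCM d) v')
      (hα : α.toContinuousMap ∈ D.dipaths) (hβ : β.toContinuousMap ∈ D.dipaths),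
      ∃ (c' d' : Y) (hc'd' : (c', d') ∈ DGamma E)
        (hc' : g.toCM c' = u') (hd' : g.toCM d' = v')
        (γ : Path c' c) (δ : Path d d')
        (hγ : γ.toContinuousMap ∈ E.dipaths) (hδ : δ.toContinuousMap ∈ E.dipaths),
        ((G.slice hc'd').comp
            (extCM D (α.cast hc' rfl) (β.cast rfl hd') hα hβ)).Homotopic
          ((extCM E γ δ hγ hδ).comp (G.slice hcd)) ∧
        ((extCM D (α.cast hc' rfl) (β.cast rfl hd') hα hβ).comp
            (g.pmap c d)).Homotopic
          ((g.pmap c' d').comp (extCM E γ δ hγ hδ))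
  /-- extension condition: for every extension `(γ,δ)` in `Y` of a pair
  `(f a, f b)` there is an extension `(α,β)` of `(a,b)` in `X`, landing in the
  image of `f`, making the `Pf`-square and the `F`-square commute up to
  homotopy. -/
  extF' : ∀ {a b : X} {u' v' : Y} (hab : (a, b) ∈ DGamma D)
      (γ : Path u' (f.toCM a)) (δ : Path (f.toCM b) v')
      (hγ : γ.toContinuousMap ∈ E.dipaths) (hδ : δ.toContinuousMap ∈ E.dipaths),
      ∃ (a' b' : X) (ha'b' : (a', b') ∈ DGamma D)
        (ha' : f.toCM a' = u') (hb' : f.toCM b' = v')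
        (α : Path a' a) (β : Path b b')
        (hα : α.toContinuousMap ∈ D.dipaths) (hβ : β.toContinuousMap ∈ D.dipaths),
        ((f.pmap a' b').comp (extCM D α β hα hβ)).Homotopic
          ((extCM E (γ.cast ha' rfl) (δ.cast rfl hb') hγ hδ).comp (f.pmap a b)) ∧
        ((F.slice ha'b').comp
            (extCM E (γ.cast ha' rfl) (δ.cast rfl hb') hγ hδ)).Homotopic
          ((extCM D α β hα hβ).comp (F.slice hab))
  /-- extension condition: for every extension `(γ,δ)` of `(c,d)` to `(c',d')`
  in `Y` there is an extension `(α,β)` in `X` making the `G`-square and the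
  `Pg`-square commute up to homotopy. -/
  extG' : ∀ {c d c' d' : Y} (hcd : (c, d) ∈ DGamma E) (hc'd' : (c', d') ∈ DGamma E)
      (γ : Path c' c) (δ : Path d d')
      (hγ : γ.toContinuousMap ∈ E.dipaths) (hδ : δ.toContinuousMap ∈ E.dipaths),
      ∃ (α : Path (g.toCM c') (g.toCM c)) (β : Path (g.toCM d) (g.toCM d'))
        (hα : α.toContinuousMap ∈ D.dipaths) (hβ : β.toContinuousMap ∈ D.dipaths),
        ((G.slice hc'd').comp (extCM D α β hα hβ)).Homotopic
          ((extCM E γ δ hγ hδ).comp (G.slice hcd)) ∧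
        ((extCM D α β hα hβ).comp (g.pmap c d)).Homotopic
          ((g.pmap c' d').comp (extCM E γ δ hγ hδ))
section Aux

open ContinuousMap

/-- Pasting of homotopy-commutative squares. -/
lemma paste_square {A B C A' B' C' : Type*}
    [TopologicalSpace A] [TopologicalSpace B] [TopologicalSpace C]
    [TopologicalSpace A'] [TopologicalSpace B'] [TopologicalSpace C']
    {u : C(A, B)} {v : C(B, C)} {u' : C(A', B')} {v' : C(B', C')}
    {eA : C(A, A')} {eB : C(B, B')} {eC : C(C, C')}
    (h1 : (u'.comp eA).Homotopic (eB.comp u))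
    (h2 : (v'.comp eB).Homotopic (eC.comp v)) :
    ((v'.comp u').comp eA).Homotopic (eC.comp (v.comp u)) := by
  have s1 : (v'.comp (u'.comp eA)).Homotopic (v'.comp (eB.comp u)) :=
    (ContinuousMap.Homotopic.refl v').comp h1
  have s2 : ((v'.comp eB).comp u).Homotopic ((eC.comp v).comp u) :=
    h2.comp (ContinuousMap.Homotopic.refl u)
  exact s1.trans s2

/-- Composition of homotopy-equivalence pairs. -/
lemma pair_comp {A B C : Type*}
    [TopologicalSpace A] [TopologicalSpace B] [TopologicalSpace C]
    {u : C(A, B)} {v : C(B, A)} {u' : C(B, C)} {v' : C(C, B)}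
    (h : IsHomotopyEquivPair u v) (h' : IsHomotopyEquivPair u' v') :
    IsHomotopyEquivPair (u'.comp u) (v.comp v') := by
  constructor
  · exact (((ContinuousMap.Homotopic.refl v).comp h'.1).comp
      (ContinuousMap.Homotopic.refl u)).trans h.1
  · exact (((ContinuousMap.Homotopic.refl u').comp h.2).comp
      (ContinuousMap.Homotopic.refl v')).trans h'.2

variable {D : DirectedSpace X} {E : DirectedSpace Y} {Fsp : DirectedSpace Z}

/-- Composite of continuously bigraded maps. -/
noncomputable def Bigraded.compWith {f₁ : DMap D E} {f₂ : DMap E Fsp}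
    (F₁ : Bigraded f₁) (F₂ : Bigraded f₂) : Bigraded (f₂.comp' f₁) where
  toCM :=
    { toFun := fun z => F₁.toCM ⟨(z.val.1,
        F₂.toCM ⟨((f₁.toCM z.val.1.1, f₁.toCM z.val.1.2), z.val.2),
          f₁.gamma_mem z.2.1, z.2.2⟩), z.2.1, F₂.mem _⟩
      continuous_toFun := by
        apply F₁.toCM.continuous.comp
        apply Continuous.subtype_mk
        apply Continuous.prodMk
        · exact continuous_fst.comp continuous_subtype_val
        · apply F₂.toCM.continuous.comp
          apply Continuous.subtype_mk
          apply Continuous.prodMk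
          · exact (f₁.toCM.continuous.comp
              (continuous_fst.comp (continuous_fst.comp continuous_subtype_val))).prodMk
              (f₁.toCM.continuous.comp
                (continuous_snd.comp (continuous_fst.comp continuous_subtype_val)))
          · exact continuous_snd.comp continuous_subtype_val }
  mem := fun z => F₁.mem _

/-- Composite of dihomotopy equivalences. -/
noncomputable def DihomotopyEquiv.compEquiv
    (h₁ : DihomotopyEquiv D E) (h₂ : DihomotopyEquiv E Fsp) :
    DihomotopyEquiv D Fsp where
  f := h₂.f.comp' h₁.f
  g := h₁.g.comp' h₂.g
  gf := (((ContinuousMap.Homotopic.refl h₁.g.toCM).comp h₂.gf).comp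
      (ContinuousMap.Homotopic.refl h₁.f.toCM)).trans h₁.gf
  fg := (((ContinuousMap.Homotopic.refl h₂.f.toCM).comp h₁.fg).comp
      (ContinuousMap.Homotopic.refl h₂.g.toCM)).trans h₂.fg
  F := h₁.F.compWith h₂.F
  G := h₂.G.compWith h₁.G
  hF := fun {a b} hab => pair_comp (h₁.hF hab) (h₂.hF (h₁.f.gamma_mem hab))
  hG := fun {c d} hcd => pair_comp (h₂.hG hcd) (h₁.hG (h₂.g.gamma_mem hcd))
  extF := fun {a b a' b'} hab ha'b' α β hα hβ => by
    obtain ⟨γ₁, δ₁, hγ₁, hδ₁, s1a, s1b⟩ := h₁.extF hab ha'b' α β hα hβ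
    obtain ⟨γ₂, δ₂, hγ₂, hδ₂, s2a, s2b⟩ :=
      h₂.extF (h₁.f.gamma_mem hab) (h₁.f.gamma_mem ha'b') γ₁ δ₁ hγ₁ hδ₁
    exact ⟨γ₂, δ₂, hγ₂, hδ₂, paste_square s1a s2a, paste_square s2b s1b⟩
  extG := fun {c d u' v'} hcd α β hα hβ => by
    obtain ⟨c₁, d₁, hc₁d₁, hc₁, hd₁, γ₁, δ₁, hγ₁, hδ₁, s1a, s1b⟩ :=
      h₁.extG (h₂.g.gamma_mem hcd) α β hα hβ
    obtain ⟨c₂, d₂, hc₂d₂, hc₂, hd₂, γ₂, δ₂, hγ₂, hδ₂, s2a, s2b⟩ :=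
      h₂.extG hcd γ₁ δ₁ hγ₁ hδ₁
    subst hc₂
    subst hd₂
    exact ⟨c₂, d₂, hc₂d₂, hc₁, hd₁, γ₂, δ₂, hγ₂, hδ₂,
      paste_square s1a s2a, (paste_square s2b.symm s1b.symm).symm⟩
  extF' := fun {a b u' v'} hab γ δ hγ hδ => by
    obtain ⟨a₂, b₂, ha₂b₂, ha₂, hb₂, α₂, β₂, hα₂, hβ₂, t2a, t2b⟩ :=
      h₂.extF' (h₁.f.gamma_mem hab) γ δ hγ hδ
    obtain ⟨a', b', ha'b', ha', hb', α, β, hα, hβ, t1a, t1b⟩ :=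
      h₁.extF' hab α₂ β₂ hα₂ hβ₂
    subst ha'
    subst hb'
    exact ⟨a', b', ha'b', ha₂, hb₂, α, β, hα, hβ,
      paste_square t1a t2a, paste_square t2b t1b⟩
  extG' := fun {c d c' d'} hcd hc'd' γ δ hγ hδ => by
    obtain ⟨α₂, β₂, hα₂, hβ₂, s2a, s2b⟩ := h₂.extG' hcd hc'd' γ δ hγ hδ
    obtain ⟨α, β, hα, hβ, s1a, s1b⟩ :=
      h₁.extG' (h₂.g.gamma_mem hcd) (h₂.g.gamma_mem hc'd') α₂ β₂ hα₂ hβ₂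
    exact ⟨α, β, hα, hβ, paste_square s1a s2a,
      (paste_square s2b.symm s1b.symm).symm⟩

end Aux

/-- Compositions of dihomotopy equivalences are dihomotopy equivalences: the
composite is `(f₂ ∘ f₁, g₁ ∘ g₂, F₁ ∘ F₂, G₂ ∘ G₁)` (the bigraded data of the
composite is computed slice-wise from the given ones). -/
theorem dihomotopyEquiv_comp
    {X Y Z : Type*} [TopologicalSpace X] [TopologicalSpace Y] [TopologicalSpace Z]
    {D : DirectedSpace X} {E : DirectedSpace Y} {Fsp : DirectedSpace Z}
    (h₁ : DihomotopyEquiv D E) (h₂ : DihomotopyEquiv E Fsp) :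
    ∃ h : DihomotopyEquiv D Fsp,
      h.f = h₂.f.comp' h₁.f ∧ h.g = h₁.g.comp' h₂.g ∧
      (∀ (a b : X) (hab : (a, b) ∈ DGamma D)
        (p : ↥(DiPaths Fsp (h.f.toCM a) (h.f.toCM b)))
        (hp : p.val ∈ DiPaths Fsp (h₂.f.toCM (h₁.f.toCM a)) (h₂.f.toCM (h₁.f.toCM b))),
        ((h.F.slice hab) p).val =
          ((h₁.F.slice hab) ((h₂.F.slice (h₁.f.gamma_mem hab)) ⟨p.val, hp⟩)).val) ∧
      (∀ (c d : Z) (hcd : (c, d) ∈ DGamma Fsp)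
        (q : ↥(DiPaths D (h.g.toCM c) (h.g.toCM d)))
        (hq : q.val ∈ DiPaths D (h₁.g.toCM (h₂.g.toCM c)) (h₁.g.toCM (h₂.g.toCM d))),
        ((h.G.slice hcd) q).val =
          ((h₂.G.slice hcd) ((h₁.G.slice (h₂.g.gamma_mem hcd)) ⟨q.val, hq⟩)).val) := by
  exact ⟨h₁.compEquiv h₂, rfl, rfl, fun _ _ _ _ _ => rfl, fun _ _ _ _ _ => rfl⟩
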